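/- Suppose the pointwise inequality A((-f*)'(s) I(s)) ≤ (d/ds) ∫_{{|f| > f*(s)}} A(|∇f|) dγₙ holds a.e. for a convex increasing function A with A(0)=0. Then after integration, ∫₀¹ A((-f*)'(s) I(s)) ds ≤ ∫_{ℝⁿ} A(|∇f|) dγₙ, and the left-hand side equals ∫_{ℝⁿ} A(|∇f°|) dγₙ, where f° is the Gaussian symmetrization of f. -/

import Mathlib

open MeasureTheory Real

/-- The standard one-dimensional Gaussian density `φ(x) = (2π)^{-1/2} e^{-x²/2}`. -/
noncomputable def gaussPdf (x : ℝ) : ℝ := (2 * Real.pi) ^ (-(1:ℝ)/2) * Real.exp (-x^2 / 2)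

/-- The standard Gaussian cumulative distribution function `Φ(r) = ∫_{-∞}^r φ(t) dt`. -/
noncomputable def gaussCdf (r : ℝ) : ℝ := ∫ t in Set.Iic r, gaussPdf t

/-- The inverse of `Φ`. -/
noncomputable def gaussCdfInv : ℝ → ℝ := Function.invFun gaussCdf

/-- The Gaussian isoperimetric function `I(t) = φ(Φ⁻¹(t))` on `(0,1)`, with `I(0)=I(1)=0`. -/
noncomputable def Igauss (t : ℝ) : ℝ :=
  if t = 0 ∨ t = 1 then 0 else gaussPdf (gaussCdfInv t)

open scoped ENNReal

/-- The standard Gaussian measure `γₙ` on `ℝⁿ`. -/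
noncomputable def gaussMeasure (n : ℕ) : Measure (Fin n → ℝ) :=
  Measure.pi fun _ => ProbabilityTheory.gaussianReal 0 1

/-- The Gaussian distribution function `λ_f(t) = γₙ({|f| > t})`. -/
noncomputable def distFun (n : ℕ) (f : (Fin n → ℝ) → ℝ) (t : ℝ) : ℝ :=
  (gaussMeasure n {x | t < |f x|}).toReal

/-- The decreasing rearrangement of `f` with respect to `γₙ`:
`f*(s) = inf {t ≥ 0 : λ_f(t) ≤ s}`. -/
noncomputable def rearr (n : ℕ) (f : (Fin n → ℝ) → ℝ) (s : ℝ) : ℝ :=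
  sInf {t : ℝ | 0 ≤ t ∧ distFun n f t ≤ s}

/-- The maximal function of the rearrangement, `f**(t) = (1/t) ∫₀ᵗ f*(s) ds`. -/
noncomputable def rearr2 (n : ℕ) (f : (Fin n → ℝ) → ℝ) (t : ℝ) : ℝ :=
  (1/t) * ∫ s in (0:ℝ)..t, rearr n f s

/-- The modulus of the gradient, `|∇f|(x) = ‖Df(x)‖`. -/
noncomputable def gradNorm (n : ℕ) (f : (Fin n → ℝ) → ℝ) (x : Fin n → ℝ) : ℝ :=
  ‖fderiv ℝ f x‖

/-- The Gaussian symmetrization `f°(x) = f*(Φ(x₁))`. -/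
noncomputable def gaussSymm (n : ℕ) [NeZero n] (f : (Fin n → ℝ) → ℝ)
    (x : Fin n → ℝ) : ℝ :=
  rearr n f (gaussCdf (x 0))

/-- A Young's function: convex, increasing on `[0,∞)`, vanishing at `0`. -/
def YoungFunction (A : ℝ → ℝ) : Prop :=
  ConvexOn ℝ (Set.Ici 0) A ∧ MonotoneOn A (Set.Ici 0) ∧ A 0 = 0

lemma gaussPdf_eq_pdfReal : gaussPdf = ProbabilityTheory.gaussianPDFReal 0 1 := by
  funext x
  unfold gaussPdf ProbabilityTheory.gaussianPDFReal
  have h2π : (0:ℝ) ≤ 2 * Real.pi := by positivity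
  simp only [NNReal.coe_one, mul_one]
  rw [Real.sqrt_eq_rpow, ← Real.rpow_neg h2π]
  norm_num

lemma gaussPdf_pos (x : ℝ) : 0 < gaussPdf x := by
  unfold gaussPdf; positivity

lemma continuous_gaussPdf : Continuous gaussPdf := by
  unfold gaussPdf; fun_prop

lemma integrable_gaussPdf : Integrable gaussPdf := by
  rw [gaussPdf_eq_pdfReal]; exact ProbabilityTheory.integrable_gaussianPDFReal 0 1

lemma gaussCdf_sub (a b : ℝ) : gaussCdf b - gaussCdf a = ∫ t in a..b, gaussPdf t := by
  exact intervalIntegral.integral_Iic_sub_Iic integrable_gaussPdf.integrableOn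
    integrable_gaussPdf.integrableOn

lemma gaussCdf_strictMono : StrictMono gaussCdf := by
  intro a b hab
  have h : 0 < ∫ t in a..b, gaussPdf t :=
    intervalIntegral.intervalIntegral_pos_of_pos_on
      (integrable_gaussPdf.intervalIntegrable) (fun x _ => gaussPdf_pos x) hab
  have := gaussCdf_sub a b
  linarith

lemma gaussCdf_pos (r : ℝ) : 0 < gaussCdf r := by
  have h : 0 < ∫ t in (r-1)..r, gaussPdf t :=
    intervalIntegral.intervalIntegral_pos_of_pos_on
      (integrable_gaussPdf.intervalIntegrable) (fun x _ => gaussPdf_pos x) (by linarith)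
  have h2 := gaussCdf_sub (r-1) r
  have h3 : 0 ≤ gaussCdf (r-1) := by
    unfold gaussCdf
    exact setIntegral_nonneg measurableSet_Iic (fun x _ => (gaussPdf_pos x).le)
  linarith

lemma integral_gaussPdf : ∫ x, gaussPdf x = 1 := by
  have h : ∀ x : ℝ, gaussPdf x = (2 * Real.pi) ^ (-(1:ℝ)/2) * Real.exp (-(1/2) * x^2) := by
    intro x; unfold gaussPdf; ring_nf
  simp_rw [h]
  rw [integral_const_mul, integral_gaussian]
  have h2π : (0:ℝ) < 2 * Real.pi := by positivity
  rw [show Real.pi / (1/2) = 2 * Real.pi by ring, Real.sqrt_eq_rpow,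
    ← Real.rpow_add h2π]
  norm_num

lemma gaussCdf_lt_one (r : ℝ) : gaussCdf r < 1 := by
  have hcompl : gaussCdf r + ∫ t in Set.Ioi r, gaussPdf t = 1 := by
    rw [← integral_gaussPdf]
    unfold gaussCdf
    rw [← integral_add_compl measurableSet_Iic integrable_gaussPdf]
    congr 1
    simp [Set.compl_Iic]
  have h : 0 < ∫ t in r..(r+1), gaussPdf t :=
    intervalIntegral.intervalIntegral_pos_of_pos_on
      (integrable_gaussPdf.intervalIntegrable) (fun x _ => gaussPdf_pos x) (by linarith)
  have h2 : (∫ t in r..(r+1), gaussPdf t) ≤ ∫ t in Set.Ioi r, gaussPdf t := by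
    rw [intervalIntegral.integral_of_le (by linarith)]
    apply setIntegral_mono_set integrable_gaussPdf.integrableOn
      (ae_of_all _ (fun x => (gaussPdf_pos x).le))
    filter_upwards with x hx using hx.1
  linarith

lemma lipschitzWith_gaussCdf : LipschitzWith (Real.toNNReal ((2 * Real.pi) ^ (-(1:ℝ)/2)))
    gaussCdf := by
  have hc : ∀ x, |gaussPdf x| ≤ (2 * Real.pi) ^ (-(1:ℝ)/2) := by
    intro x
    rw [abs_of_pos (gaussPdf_pos x)]
    unfold gaussPdf
    have he : Real.exp (-x^2/2) ≤ 1 := by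
      rw [Real.exp_le_one_iff]; nlinarith [sq_nonneg x]
    exact mul_le_of_le_one_right (by positivity) he
  apply LipschitzWith.of_dist_le_mul
  intro a b
  rw [Real.dist_eq, Real.dist_eq,
    show gaussCdf a - gaussCdf b = ∫ t in b..a, gaussPdf t from gaussCdf_sub b a,
    Real.coe_toNNReal _ (by positivity : (0:ℝ) ≤ (2 * Real.pi) ^ (-(1:ℝ)/2))]
  have h := intervalIntegral.norm_integral_le_of_norm_le_const (a := b) (b := a)
    (C := (2 * Real.pi) ^ (-(1:ℝ)/2)) (f := gaussPdf) (fun x _ => hc x)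
  simpa using h
lemma continuous_gaussCdf : Continuous gaussCdf := lipschitzWith_gaussCdf.continuous

lemma hasDerivAt_gaussCdf (r : ℝ) : HasDerivAt gaussCdf (gaussPdf r) r := by
  have h1 : HasDerivAt (fun u => gaussCdf 0 + ∫ t in (0:ℝ)..u, gaussPdf t) (gaussPdf r) r := by
    apply HasDerivAt.const_add
    exact intervalIntegral.integral_hasDerivAt_right
      (integrable_gaussPdf.intervalIntegrable)
      (continuous_gaussPdf.stronglyMeasurable.stronglyMeasurableAtFilter)
      continuous_gaussPdf.continuousAt
  have h2 : (fun u => gaussCdf 0 + ∫ t in (0:ℝ)..u, gaussPdf t) = gaussCdf := by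
    funext u
    have := gaussCdf_sub 0 u
    linarith
  rwa [h2] at h1

lemma gaussCdf_add_Ioi (r : ℝ) : gaussCdf r + ∫ t in Set.Ioi r, gaussPdf t = 1 := by
  rw [← integral_gaussPdf]
  unfold gaussCdf
  rw [← integral_add_compl measurableSet_Iic integrable_gaussPdf]
  congr 1
  simp [Set.compl_Iic]

lemma tendsto_gaussCdf_atTop : Filter.Tendsto gaussCdf Filter.atTop (nhds 1) := by
  have hmono : Monotone gaussCdf := gaussCdf_strictMono.monotone
  have hbdd : BddAbove (Set.range gaussCdf) := ⟨1, by rintro _ ⟨r, rfl⟩; exact (gaussCdf_lt_one r).le⟩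
  have h1 : Filter.Tendsto gaussCdf Filter.atTop (nhds (⨆ r, gaussCdf r)) :=
    tendsto_atTop_ciSup hmono hbdd
  have hseq : Filter.Tendsto (fun n : ℕ => gaussCdf n) Filter.atTop (nhds 1) := by
    have hu : ⋃ n : ℕ, Set.Iic ((n : ℝ)) = Set.univ := by
      ext x
      simp only [Set.mem_iUnion, Set.mem_Iic, Set.mem_univ, iff_true]
      obtain ⟨n, hn⟩ := exists_nat_ge x
      exact ⟨n, hn⟩
    have := MeasureTheory.tendsto_setIntegral_of_monotone (μ := volume)
      (s := fun n : ℕ => Set.Iic ((n : ℝ))) (f := gaussPdf)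
      (fun n => measurableSet_Iic)
      (fun a b hab => Set.Iic_subset_Iic.2 (by exact_mod_cast hab))
      (by rw [hu]; exact integrable_gaussPdf.integrableOn)
    rw [hu] at this
    simpa [integral_gaussPdf, gaussCdf] using this
  have hseq' : Filter.Tendsto (fun n : ℕ => gaussCdf n) Filter.atTop (nhds (⨆ r, gaussCdf r)) :=
    h1.comp tendsto_natCast_atTop_atTop
  rwa [tendsto_nhds_unique hseq' hseq] at h1

lemma tendsto_gaussCdf_atBot : Filter.Tendsto gaussCdf Filter.atBot (nhds 0) := by
  have hmono : Monotone gaussCdf := gaussCdf_strictMono.monotone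
  have hbdd : BddBelow (Set.range gaussCdf) := ⟨0, by rintro _ ⟨r, rfl⟩; exact (gaussCdf_pos r).le⟩
  have h1 : Filter.Tendsto gaussCdf Filter.atBot (nhds (⨅ r, gaussCdf r)) :=
    tendsto_atBot_ciInf hmono hbdd
  have hseq : Filter.Tendsto (fun n : ℕ => gaussCdf (-(n:ℝ))) Filter.atTop (nhds 0) := by
    have hu : ⋃ n : ℕ, Set.Ioi (-(n : ℝ)) = Set.univ := by
      ext x
      simp only [Set.mem_iUnion, Set.mem_Ioi, Set.mem_univ, iff_true]
      obtain ⟨n, hn⟩ := exists_nat_gt (-x)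
      exact ⟨n, by linarith⟩
    have h2 := MeasureTheory.tendsto_setIntegral_of_monotone (μ := volume)
      (s := fun n : ℕ => Set.Ioi (-(n : ℝ))) (f := gaussPdf)
      (fun n => measurableSet_Ioi)
      (fun a b hab => Set.Ioi_subset_Ioi (by exact_mod_cast neg_le_neg (Nat.cast_le.2 hab)))
      (by rw [hu]; exact integrable_gaussPdf.integrableOn)
    rw [hu] at h2
    rw [MeasureTheory.setIntegral_univ, integral_gaussPdf] at h2
    have h3 : ∀ n : ℕ, gaussCdf (-(n:ℝ)) = 1 - ∫ t in Set.Ioi (-(n:ℝ)), gaussPdf t := by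
      intro n; have := gaussCdf_add_Ioi (-(n:ℝ)); linarith
    simp_rw [h3]
    have := h2.const_sub (1:ℝ)
    simpa using this
  have hseq' : Filter.Tendsto (fun n : ℕ => gaussCdf (-(n:ℝ))) Filter.atTop
      (nhds (⨅ r, gaussCdf r)) := by
    apply h1.comp
    exact Filter.tendsto_neg_atTop_atBot.comp tendsto_natCast_atTop_atTop
  rwa [tendsto_nhds_unique hseq' hseq] at h1

lemma gaussCdf_surj {s : ℝ} (hs : s ∈ Set.Ioo (0:ℝ) 1) : ∃ r, gaussCdf r = s := by
  obtain ⟨a, ha⟩ : ∃ a, gaussCdf a < s := by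
    have := tendsto_gaussCdf_atBot.eventually_lt_const hs.1
    exact this.exists
  obtain ⟨b, hb⟩ : ∃ b, s < gaussCdf b := by
    have := tendsto_gaussCdf_atTop.eventually_const_lt hs.2
    exact this.exists
  have hab : a ≤ b := (gaussCdf_strictMono.lt_iff_lt.1 (ha.trans hb)).le
  obtain ⟨r, _, hr⟩ := intermediate_value_Icc hab continuous_gaussCdf.continuousOn
    (Set.mem_Icc.2 ⟨ha.le, hb.le⟩)
  exact ⟨r, hr⟩

lemma gaussCdf_mem_Ioo (r : ℝ) : gaussCdf r ∈ Set.Ioo (0:ℝ) 1 :=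
  ⟨gaussCdf_pos r, gaussCdf_lt_one r⟩

lemma gaussCdfInv_gaussCdf (r : ℝ) : gaussCdfInv (gaussCdf r) = r :=
  Function.leftInverse_invFun gaussCdf_strictMono.injective r

lemma gaussCdf_gaussCdfInv {s : ℝ} (hs : s ∈ Set.Ioo (0:ℝ) 1) :
    gaussCdf (gaussCdfInv s) = s :=
  Function.invFun_eq (gaussCdf_surj hs)

lemma continuousAt_gaussCdfInv {s : ℝ} (hs : s ∈ Set.Ioo (0:ℝ) 1) :
    ContinuousAt gaussCdfInv s := by
  set r := gaussCdfInv s with hr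
  have hΦr : gaussCdf r = s := gaussCdf_gaussCdfInv hs
  rw [ContinuousAt]
  apply tendsto_order.2
  constructor
  · intro b hb
    have h1 : gaussCdf b < s := by rw [← hΦr]; exact gaussCdf_strictMono hb
    have hev : {y | gaussCdf b < y ∧ y < 1} ∈ nhds s := by
      apply IsOpen.mem_nhds
      · exact (isOpen_lt continuous_const continuous_id).inter (isOpen_lt continuous_id
          continuous_const) |>.mono (by rfl) |>.mono (by rfl) |>.mono (by rfl)
      · exact ⟨h1, hs.2⟩
    filter_upwards [hev] with y hy
    have hy01 : y ∈ Set.Ioo (0:ℝ) 1 := ⟨lt_trans (gaussCdf_pos b) hy.1, hy.2⟩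
    have : gaussCdf b < gaussCdf (gaussCdfInv y) := by rw [gaussCdf_gaussCdfInv hy01]; exact hy.1
    exact gaussCdf_strictMono.lt_iff_lt.1 this
  · intro b hb
    have h1 : s < gaussCdf b := by rw [← hΦr]; exact gaussCdf_strictMono hb
    have hev : {y | y < gaussCdf b ∧ 0 < y} ∈ nhds s := by
      apply IsOpen.mem_nhds
      · exact (isOpen_lt continuous_id continuous_const).inter (isOpen_lt continuous_const
          continuous_id)
      · exact ⟨h1, hs.1⟩
    filter_upwards [hev] with y hy
    have hy01 : y ∈ Set.Ioo (0:ℝ) 1 := ⟨hy.2, lt_trans hy.1 (gaussCdf_lt_one b)⟩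
    have : gaussCdf (gaussCdfInv y) < gaussCdf b := by rw [gaussCdf_gaussCdfInv hy01]; exact hy.1
    exact gaussCdf_strictMono.lt_iff_lt.1 this

lemma hasDerivAt_gaussCdfInv {s : ℝ} (hs : s ∈ Set.Ioo (0:ℝ) 1) :
    HasDerivAt gaussCdfInv (gaussPdf (gaussCdfInv s))⁻¹ s := by
  apply HasDerivAt.of_local_left_inverse (continuousAt_gaussCdfInv hs)
    (hasDerivAt_gaussCdf (gaussCdfInv s)) (gaussPdf_pos _).ne'
  filter_upwards [IsOpen.mem_nhds isOpen_Ioo hs] with y hy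
  exact gaussCdf_gaussCdfInv hy
open ProbabilityTheory in
lemma gaussianReal_Iic (r : ℝ) :
    gaussianReal 0 1 (Set.Iic r) = ENNReal.ofReal (gaussCdf r) := by
  rw [gaussianReal_apply_eq_integral 0 one_ne_zero, ← gaussPdf_eq_pdfReal]
  rfl

open ProbabilityTheory in
lemma map_gaussCdf_eq :
    Measure.map gaussCdf (gaussianReal 0 1) = volume.restrict (Set.Ioo (0:ℝ) 1) := by
  have hmap : IsProbabilityMeasure (Measure.map gaussCdf (gaussianReal 0 1)) :=
    Measure.isProbabilityMeasure_map continuous_gaussCdf.measurable.aemeasurable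
  apply Measure.ext_of_Iic
  intro y
  rw [Measure.map_apply continuous_gaussCdf.measurable measurableSet_Iic,
    Measure.restrict_apply measurableSet_Iic]
  by_cases h1 : y ≤ 0
  · have hpre : gaussCdf ⁻¹' Set.Iic y = ∅ := by
      ext x
      simp only [Set.mem_preimage, Set.mem_Iic, Set.mem_empty_iff_false, iff_false, not_le]
      exact lt_of_le_of_lt h1 (gaussCdf_pos x)
    have hint : Set.Iic y ∩ Set.Ioo (0:ℝ) 1 = ∅ := by
      ext x
      simp only [Set.mem_inter_iff, Set.mem_Iic, Set.mem_Ioo, Set.mem_empty_iff_false, iff_false]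
      rintro ⟨hx1, hx2, _⟩; linarith
    rw [hpre, hint]; simp
  · push_neg at h1
    by_cases h2 : 1 ≤ y
    · have hpre : gaussCdf ⁻¹' Set.Iic y = Set.univ := by
        ext x
        simp only [Set.mem_preimage, Set.mem_Iic, Set.mem_univ, iff_true]
        exact le_trans (gaussCdf_lt_one x).le h2
      have hint : Set.Iic y ∩ Set.Ioo (0:ℝ) 1 = Set.Ioo (0:ℝ) 1 := by
        apply Set.inter_eq_self_of_subset_right
        rintro x ⟨_, hx2⟩
        exact le_trans hx2.le h2
      rw [hpre, hint]
      simp [measure_univ]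
    · push_neg at h2
      have hy : y ∈ Set.Ioo (0:ℝ) 1 := ⟨h1, h2⟩
      have hpre : gaussCdf ⁻¹' Set.Iic y = Set.Iic (gaussCdfInv y) := by
        ext x
        simp only [Set.mem_preimage, Set.mem_Iic]
        constructor
        · intro hx
          have : gaussCdf x ≤ gaussCdf (gaussCdfInv y) := by
            rw [gaussCdf_gaussCdfInv hy]; exact hx
          exact gaussCdf_strictMono.le_iff_le.1 this
        · intro hx
          have := gaussCdf_strictMono.le_iff_le.2 hx
          rwa [gaussCdf_gaussCdfInv hy] at this
      have hint : Set.Iic y ∩ Set.Ioo (0:ℝ) 1 = Set.Ioc (0:ℝ) y := by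
        ext x
        simp only [Set.mem_inter_iff, Set.mem_Iic, Set.mem_Ioo, Set.mem_Ioc]
        constructor
        · rintro ⟨hx1, hx2, _⟩; exact ⟨hx2, hx1⟩
        · rintro ⟨hx1, hx2⟩; exact ⟨hx2, hx1, lt_of_le_of_lt hx2 h2⟩
      rw [hpre, hint, gaussianReal_Iic, gaussCdf_gaussCdfInv hy, Real.volume_Ioc]
      simp

instance gaussMeasure_isProbabilityMeasure (n : ℕ) :
    IsProbabilityMeasure (gaussMeasure n) := by
  unfold gaussMeasure; infer_instance

open ProbabilityTheory in
lemma map_eval_gaussMeasure (n : ℕ) [NeZero n] :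
    Measure.map (fun x : Fin n → ℝ => x 0) (gaussMeasure n) = gaussianReal 0 1 := by
  apply Measure.ext
  intro s hs
  rw [Measure.map_apply (measurable_pi_apply 0) hs]
  classical
  have hpre : (fun x : Fin n → ℝ => x 0) ⁻¹' s
      = Set.univ.pi (fun j => if j = 0 then s else Set.univ) := by
    ext x
    simp only [Set.mem_preimage, Set.mem_univ_pi]
    constructor
    · intro h j
      by_cases hj : j = 0
      · subst hj; simpa using h
      · simp [hj]
    · intro h
      have := h 0
      simpa using this
  rw [hpre]
  unfold gaussMeasure
  rw [Measure.pi_pi]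
  rw [Finset.prod_eq_single_of_mem 0 (Finset.mem_univ 0)]
  · simp
  · intro b _ hb
    simp [hb]
lemma rearr_nonneg (n : ℕ) (f : (Fin n → ℝ) → ℝ) (s : ℝ) : 0 ≤ rearr n f s :=
  Real.sInf_nonneg (fun _ hx => hx.1)

lemma distFun_anti (n : ℕ) (f : (Fin n → ℝ) → ℝ) {t t' : ℝ} (h : t ≤ t') :
    distFun n f t' ≤ distFun n f t := by
  unfold distFun
  refine ENNReal.toReal_mono (measure_ne_top _ _) (measure_mono ?_)
  intro x hx; exact lt_of_le_of_lt h hx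

lemma exists_distFun_le (n : ℕ) (f : (Fin n → ℝ) → ℝ) (hK : Continuous f) {s : ℝ} (hs : 0 < s) :
    ∃ t, 0 ≤ t ∧ distFun n f t ≤ s := by
  have hmeas : ∀ t : ℝ, MeasurableSet {x : Fin n → ℝ | t < |f x|} := fun t =>
    measurableSet_lt measurable_const hK.measurable.abs
  have hanti : Antitone (fun m : ℕ => {x : Fin n → ℝ | (m:ℝ) < |f x|}) := by
    intro a b hab x hx
    exact lt_of_le_of_lt (show (a:ℝ) ≤ (b:ℝ) from Nat.cast_le.mpr hab) hx
  have hinter : ⋂ m : ℕ, {x : Fin n → ℝ | (m:ℝ) < |f x|} = ∅ := by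
    ext x
    simp only [Set.mem_iInter, Set.mem_setOf_eq, Set.mem_empty_iff_false, iff_false, not_forall,
      not_lt]
    obtain ⟨m, hm⟩ := exists_nat_ge |f x|
    exact ⟨m, hm⟩
  have htend := MeasureTheory.tendsto_measure_iInter_atTop (μ := gaussMeasure n)
    (s := fun m : ℕ => {x : Fin n → ℝ | (m:ℝ) < |f x|})
    (fun m => (hmeas (m:ℝ)).nullMeasurableSet) hanti ⟨0, measure_ne_top _ _⟩
  rw [hinter] at htend
  simp only [measure_empty] at htend
  have htoReal := (ENNReal.tendsto_toReal (by norm_num : (0:ℝ≥0∞) ≠ ⊤)).comp htend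
  simp only [ENNReal.toReal_zero] at htoReal
  obtain ⟨m, hm⟩ := (htoReal.eventually_lt_const hs).exists
  exact ⟨m, Nat.cast_nonneg m, hm.le⟩

lemma rearr_anti (n : ℕ) (f : (Fin n → ℝ) → ℝ) (hK : Continuous f) {s s' : ℝ}
    (hs : 0 < s) (hss : s ≤ s') : rearr n f s' ≤ rearr n f s := by
  apply csInf_le_csInf ⟨0, fun x hx => hx.1⟩
  · obtain ⟨t, ht0, ht⟩ := exists_distFun_le n f hK hs
    exact ⟨t, ht0, ht⟩
  · intro t ht
    exact ⟨ht.1, le_trans ht.2 hss⟩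

lemma antitone_rearr_gaussCdf (n : ℕ) (f : (Fin n → ℝ) → ℝ) (hK : Continuous f) :
    Antitone (fun t => rearr n f (gaussCdf t)) := by
  intro a b hab
  exact rearr_anti n f hK (gaussCdf_pos a) (gaussCdf_strictMono.monotone hab)

lemma deriv_nonpos_of_antitone {g : ℝ → ℝ} (hg : Antitone g) (t : ℝ) : deriv g t ≤ 0 := by
  by_cases h : DifferentiableAt ℝ g t
  · have hd := h.hasDerivAt
    rw [hasDerivAt_iff_tendsto_slope] at hd
    have hd' : Filter.Tendsto (slope g t) (nhdsWithin t (Set.Ioi t)) (nhds (deriv g t)) :=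
      hd.mono_left (nhdsWithin_mono t (fun y hy => Set.mem_compl_singleton_iff.2 (ne_of_gt hy)))
    apply le_of_tendsto hd'
    filter_upwards [self_mem_nhdsWithin] with y hy
    have h1 : g y ≤ g t := hg (le_of_lt hy)
    rw [slope_def_field]
    apply div_nonpos_of_nonpos_of_nonneg (by linarith)
    have : t < y := hy
    linarith
  · rw [deriv_zero_of_not_differentiableAt h]

lemma deriv_rearr_nonpos (n : ℕ) (f : (Fin n → ℝ) → ℝ) (hK : Continuous f) {s : ℝ}
    (hs : s ∈ Set.Ioo (0:ℝ) 1) : deriv (rearr n f) s ≤ 0 := by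
  by_cases h : DifferentiableAt ℝ (rearr n f) s
  · have hd := h.hasDerivAt
    rw [hasDerivAt_iff_tendsto_slope] at hd
    have hmem : Set.Ioo s 1 ∈ nhdsWithin s (Set.Ioi s) :=
      Ioo_mem_nhdsGT_of_mem ⟨le_refl s, hs.2⟩
    have hd' : Filter.Tendsto (slope (rearr n f) s) (nhdsWithin s (Set.Ioi s))
        (nhds (deriv (rearr n f) s)) :=
      hd.mono_left (nhdsWithin_mono s (fun y hy => Set.mem_compl_singleton_iff.2 (ne_of_gt hy)))
    apply le_of_tendsto hd'
    filter_upwards [hmem, self_mem_nhdsWithin] with y hy hy'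
    have h1 : rearr n f y ≤ rearr n f s := rearr_anti n f hK hs.1 (le_of_lt hy.1)
    rw [slope_def_field]
    apply div_nonpos_of_nonpos_of_nonneg (by linarith)
    have : s < y := hy'
    linarith
  · rw [deriv_zero_of_not_differentiableAt h]

lemma rearr_eqOn_comp (n : ℕ) (f : (Fin n → ℝ) → ℝ) {y : ℝ} (hy : y ∈ Set.Ioo (0:ℝ) 1) :
    rearr n f y = (fun t => rearr n f (gaussCdf t)) (gaussCdfInv y) := by
  simp only []
  rw [gaussCdf_gaussCdfInv hy]

lemma rearr_hasDerivAt_of_comp (n : ℕ) (f : (Fin n → ℝ) → ℝ) {t d : ℝ}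
    (hgt : HasDerivAt (fun u => rearr n f (gaussCdf u)) d t) :
    HasDerivAt (rearr n f) (d * (gaussPdf t)⁻¹) (gaussCdf t) := by
  have hmem : gaussCdf t ∈ Set.Ioo (0:ℝ) 1 := gaussCdf_mem_Ioo t
  have hinv := hasDerivAt_gaussCdfInv hmem
  rw [gaussCdfInv_gaussCdf] at hinv
  have hgt' : HasDerivAt (fun u => rearr n f (gaussCdf u)) d (gaussCdfInv (gaussCdf t)) := by
    rwa [gaussCdfInv_gaussCdf]
  have hcomp := hgt'.comp (gaussCdf t) hinv
  have heq : (fun u => rearr n f (gaussCdf u)) ∘ gaussCdfInv =ᶠ[nhds (gaussCdf t)] rearr n f := by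
    filter_upwards [IsOpen.mem_nhds isOpen_Ioo hmem] with y hy
    exact (rearr_eqOn_comp n f hy).symm
  exact hcomp.congr_of_eventuallyEq heq.symm

lemma norm_proj_zero (n : ℕ) [NeZero n] :
    ‖(ContinuousLinearMap.proj (R := ℝ) (φ := fun _ : Fin n => ℝ) 0)‖ = 1 := by
  apply le_antisymm
  · apply ContinuousLinearMap.opNorm_le_bound _ zero_le_one
    intro x
    simpa using norm_le_pi_norm x 0
  · have h := (ContinuousLinearMap.proj (R := ℝ) (φ := fun _ : Fin n => ℝ) 0).le_opNorm
      (Pi.single 0 1)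
    rw [Pi.norm_single] at h
    simpa using h

lemma gradNorm_gaussSymm (n : ℕ) [NeZero n] (f : (Fin n → ℝ) → ℝ) (x : Fin n → ℝ) :
    gradNorm n (gaussSymm n f) x = |deriv (fun t => rearr n f (gaussCdf t)) (x 0)| := by
  classical
  set g : ℝ → ℝ := fun t => rearr n f (gaussCdf t) with hg
  have hcomp : gaussSymm n f = fun y : Fin n → ℝ => g (y 0) := rfl
  by_cases h : DifferentiableAt ℝ g (x 0)
  · have hproj : HasFDerivAt (fun y : Fin n → ℝ => y 0)
        (ContinuousLinearMap.proj (R := ℝ) (φ := fun _ : Fin n => ℝ) 0) x :=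
      (ContinuousLinearMap.proj (R := ℝ) (φ := fun _ : Fin n => ℝ) 0).hasFDerivAt
    have hF := h.hasDerivAt.comp_hasFDerivAt x hproj
    have hF' : HasFDerivAt (fun y : Fin n → ℝ => g (y 0))
        (deriv g (x 0) • ContinuousLinearMap.proj (R := ℝ) (φ := fun _ : Fin n => ℝ) 0) x := hF
    unfold gradNorm
    rw [hcomp, hF'.fderiv, norm_smul, norm_proj_zero]
    simp [Real.norm_eq_abs]
  · have hnd : ¬ DifferentiableAt ℝ (fun y : Fin n → ℝ => g (y 0)) x := by
      intro hd
      have hu : DifferentiableAt ℝ (fun t : ℝ => Function.update x 0 t) (x 0) := by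
        apply differentiableAt_pi.2
        intro i
        by_cases hi : i = 0
        · subst hi
          simp only [Function.update_self]
          exact differentiableAt_id
        · simp only [Function.update_of_ne hi]
          exact differentiableAt_const _
      have hx : Function.update x 0 (x 0) = x := Function.update_eq_self 0 x
      have hd' : DifferentiableAt ℝ ((fun y : Fin n → ℝ => g (y 0)) ∘
          (fun t : ℝ => Function.update x 0 t)) (x 0) := by
        apply DifferentiableAt.comp
        · rwa [hx]
        · exact hu
      have heq : ((fun y : Fin n → ℝ => g (y 0)) ∘ (fun t : ℝ => Function.update x 0 t)) = g := by
        funext t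
        simp [Function.update_self]
      rw [heq] at hd'
      exact h hd'
    unfold gradNorm
    rw [hcomp, fderiv_zero_of_not_differentiableAt hnd, deriv_zero_of_not_differentiableAt h]
    simp
lemma young_nonneg {A : ℝ → ℝ} (hA : YoungFunction A) {x : ℝ} (hx : 0 ≤ x) : 0 ≤ A x := by
  have := hA.2.1 (Set.mem_Ici.2 le_rfl) (Set.mem_Ici.2 hx) hx
  rwa [hA.2.2] at this

lemma young_mono_comp {A : ℝ → ℝ} (hA : YoungFunction A) :
    Monotone (fun u => A (max u 0)) := by
  intro a b hab
  exact hA.2.1 (Set.mem_Ici.2 (le_max_right a 0)) (Set.mem_Ici.2 (le_max_right b 0))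
    (max_le_max hab le_rfl)

lemma young_measurable_comp {A : ℝ → ℝ} (hA : YoungFunction A) {α : Type*} [MeasurableSpace α]
    {h : α → ℝ} (hh : Measurable h) (hpos : ∀ a, 0 ≤ h a) :
    Measurable (fun a => A (h a)) := by
  have : (fun a => A (h a)) = (fun u => A (max u 0)) ∘ h := by
    funext a; simp [max_eq_left (hpos a)]
  rw [this]
  exact (young_mono_comp hA).measurable.comp hh

lemma monotone_integral_deriv_le {G : ℝ → ℝ} (hG : Monotone G) {T : ℝ}
    (hbound : ∀ u, 0 ≤ G u ∧ G u ≤ T) :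
    Integrable (deriv G) (volume.restrict (Set.Ioo (0:ℝ) 1)) ∧
      (∫ s in Set.Ioo (0:ℝ) 1, deriv G s) ≤ T := by
  have hT0 : (0:ℝ) ≤ T := le_trans (hbound 0).1 (hbound 0).2
  set μ := hG.stieltjesFunction.measure with hμ
  haveI : SigmaFinite μ := inferInstance
  have hae : ∀ᵐ x, HasDerivAt G ((μ.rnDeriv volume x).toReal) x := hG.ae_hasDerivAt
  have hderiv_ae : deriv G =ᵐ[volume] fun x => (μ.rnDeriv volume x).toReal := by
    filter_upwards [hae] with x hx using hx.deriv
  -- bound on the measure of (0,1)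
  have hfin : μ (Set.Ioo (0:ℝ) 1) ≤ ENNReal.ofReal T := by
    have h1 : μ (Set.Ioo (0:ℝ) 1) ≤ μ (Set.Ioc (-1:ℝ) 1) := by
      apply measure_mono
      rintro x ⟨hx1, hx2⟩
      exact ⟨by linarith, hx2.le⟩
    rw [StieltjesFunction.measure_Ioc] at h1
    refine h1.trans (ENNReal.ofReal_le_ofReal ?_)
    rw [hG.stieltjesFunction_eq, hG.stieltjesFunction_eq]
    have hub : Function.rightLim G 1 ≤ T :=
      le_of_tendsto (hG.tendsto_rightLim 1) (Filter.Eventually.of_forall fun y => (hbound y).2)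
    have hlb : 0 ≤ Function.rightLim G (-1) :=
      ge_of_tendsto (hG.tendsto_rightLim (-1)) (Filter.Eventually.of_forall fun y => (hbound y).1)
    linarith
  have hmeas : Measurable fun x => (μ.rnDeriv volume x).toReal :=
    (Measure.measurable_rnDeriv μ volume).ennreal_toReal
  have hlintle : (∫⁻ x in Set.Ioo (0:ℝ) 1, μ.rnDeriv volume x) ≤ ENNReal.ofReal T :=
    (Measure.setLIntegral_rnDeriv_le _).trans hfin
  have hint : Integrable (fun x => (μ.rnDeriv volume x).toReal)
      (volume.restrict (Set.Ioo (0:ℝ) 1)) := by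
    refine ⟨hmeas.aestronglyMeasurable, ?_⟩
    rw [hasFiniteIntegral_iff_ofReal (Filter.Eventually.of_forall fun x => ENNReal.toReal_nonneg)]
    refine lt_of_le_of_lt (le_trans (lintegral_mono fun x => ENNReal.ofReal_toReal_le) hlintle) ?_
    exact ENNReal.ofReal_lt_top
  have hint' : Integrable (deriv G) (volume.restrict (Set.Ioo (0:ℝ) 1)) :=
    hint.congr (ae_restrict_of_ae hderiv_ae.symm)
  refine ⟨hint', ?_⟩
  have heq : (∫ s in Set.Ioo (0:ℝ) 1, deriv G s)
      = ∫ s in Set.Ioo (0:ℝ) 1, (μ.rnDeriv volume s).toReal :=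
    integral_congr_ae (ae_restrict_of_ae hderiv_ae)
  rw [heq, integral_toReal ((Measure.measurable_rnDeriv μ volume).aemeasurable)
    (ae_restrict_of_ae (Measure.rnDeriv_lt_top μ volume))]
  exact ENNReal.toReal_le_of_le_ofReal hT0 hlintle
/-- Integrating the pointwise Talenti-type inequality for a Young's function `A` gives
`∫₀¹ A((-f*)'(s) I(s)) ds ≤ ∫ A(|∇f|) dγₙ`, and the left-hand side equals
`∫ A(|∇f°|) dγₙ` for the Gaussian symmetrization `f°`. -/
theorem young_integrated_polya_szego (n : ℕ) [NeZero n]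
    (f : (Fin n → ℝ) → ℝ) (hf : ∃ K, LipschitzWith K f)
    (A : ℝ → ℝ) (hA : YoungFunction A)
    (hpt : ∀ᵐ s ∂(volume.restrict (Set.Ioo (0:ℝ) 1)),
      A (deriv (fun u => - rearr n f u) s * Igauss s) ≤
        deriv (fun u => ∫ x in {y | rearr n f u < |f y|},
          A (gradNorm n f x) ∂gaussMeasure n) s) :
    (∫ s in Set.Ioo (0:ℝ) 1, A (deriv (fun u => - rearr n f u) s * Igauss s)) ≤
      (∫ x, A (gradNorm n f x) ∂gaussMeasure n) ∧
    (∫ s in Set.Ioo (0:ℝ) 1, A (deriv (fun u => - rearr n f u) s * Igauss s)) =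
      ∫ x, A (gradNorm n (gaussSymm n f) x) ∂gaussMeasure n := by
  classical
  obtain ⟨K, hK⟩ := hf
  have hfc : Continuous f := hK.continuous
  have hgradmeas : Measurable (gradNorm n f) := by
    unfold gradNorm
    exact continuous_norm.measurable.comp (measurable_fderiv ℝ f)
  have hameas : Measurable (fun x => A (gradNorm n f x)) :=
    young_measurable_comp hA hgradmeas (fun x => norm_nonneg _)
  have hanonneg : ∀ x, 0 ≤ A (gradNorm n f x) := fun x => young_nonneg hA (norm_nonneg _)
  have habound : ∀ x, A (gradNorm n f x) ≤ A K := fun x =>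
    hA.2.1 (Set.mem_Ici.2 (norm_nonneg _)) (Set.mem_Ici.2 (NNReal.coe_nonneg K))
      (norm_fderiv_le_of_lipschitz ℝ hK)
  have haint : Integrable (fun x => A (gradNorm n f x)) (gaussMeasure n) := by
    apply Integrable.mono' (integrable_const (A K)) hameas.aestronglyMeasurable
    filter_upwards with x
    rw [Real.norm_eq_abs, abs_of_nonneg (hanonneg x)]
    exact habound x
  set T : ℝ := ∫ x, A (gradNorm n f x) ∂gaussMeasure n with hT
  set G : ℝ → ℝ := fun u => ∫ x in {y | rearr n f u < |f y|},
    A (gradNorm n f x) ∂gaussMeasure n with hGdef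
  have hsetmeas : ∀ u, MeasurableSet {y : Fin n → ℝ | rearr n f u < |f y|} := fun u =>
    measurableSet_lt measurable_const hfc.measurable.abs
  have hG0 : ∀ u, 0 ≤ G u := fun u =>
    setIntegral_nonneg (hsetmeas u) (fun x _ => hanonneg x)
  have hGT : ∀ u, G u ≤ T := fun u =>
    setIntegral_le_integral haint (Filter.Eventually.of_forall hanonneg)
  have hT0 : 0 ≤ T := le_trans (hG0 0) (hGT 0)
  have hGmono : ∀ u u', 0 < u → u ≤ u' → G u ≤ G u' := by
    intro u u' hu huu'
    apply setIntegral_mono_set haint.integrableOn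
      (Filter.Eventually.of_forall hanonneg)
    apply HasSubset.Subset.eventuallyLE
    intro y hy
    exact lt_of_le_of_lt (rearr_anti n f hfc hu huu') hy
  set Gt : ℝ → ℝ := fun u => if u ≤ 0 then 0 else if u < 1 then G u else T with hGt
  have hGtmono : Monotone Gt := by
    intro u v huv
    simp only [hGt]
    by_cases h1 : u ≤ 0
    · rw [if_pos h1]
      by_cases h2 : v ≤ 0
      · rw [if_pos h2]
      · rw [if_neg h2]
        by_cases h3 : v < 1
        · rw [if_pos h3]; exact hG0 v
        · rw [if_neg h3]; exact hT0
    · rw [if_neg h1]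
      push_neg at h1
      have h2 : ¬ v ≤ 0 := by push_neg; linarith
      rw [if_neg h2]
      by_cases h3 : u < 1
      · rw [if_pos h3]
        by_cases h4 : v < 1
        · rw [if_pos h4]
          exact hGmono u v h1 huv
        · rw [if_neg h4]; exact hGT u
      · have h5 : ¬ v < 1 := by push_neg at h3 ⊢; linarith
        rw [if_neg h3, if_neg h5]
  have hGtbound : ∀ u, 0 ≤ Gt u ∧ Gt u ≤ T := by
    intro u
    simp only [hGt]
    split_ifs with h1 h2
    · exact ⟨le_rfl, hT0⟩
    · exact ⟨hG0 u, hGT u⟩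
    · exact ⟨hT0, le_rfl⟩
  obtain ⟨hintGt, hintle⟩ := monotone_integral_deriv_le hGtmono hGtbound
  have hderiv_eq : ∀ s ∈ Set.Ioo (0:ℝ) 1, deriv Gt s = deriv G s := by
    intro s hs
    apply Filter.EventuallyEq.deriv_eq
    filter_upwards [IsOpen.mem_nhds isOpen_Ioo hs] with y hy
    simp only [hGt]
    rw [if_neg (not_le.2 hy.1), if_pos hy.2]
  have hLHSnonneg : ∀ s ∈ Set.Ioo (0:ℝ) 1,
      0 ≤ A (deriv (fun u => - rearr n f u) s * Igauss s) := by
    intro s hs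
    apply young_nonneg hA
    apply mul_nonneg
    · rw [deriv.fun_neg]
      simpa using deriv_rearr_nonpos n f hfc hs
    · unfold Igauss
      split_ifs with h
      · exact le_rfl
      · exact (gaussPdf_pos _).le
  have hineq : (∫ s in Set.Ioo (0:ℝ) 1, A (deriv (fun u => - rearr n f u) s * Igauss s)) ≤ T := by
    refine le_trans (integral_mono_of_nonneg ?_ hintGt ?_) hintle
    · filter_upwards [ae_restrict_mem measurableSet_Ioo] with s hs using hLHSnonneg s hs
    · filter_upwards [hpt, ae_restrict_mem measurableSet_Ioo] with s h1 h2
      rw [hderiv_eq s h2]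
      exact h1
  set g : ℝ → ℝ := fun t => rearr n f (gaussCdf t) with hg
  have hganti : Antitone g := antitone_rearr_gaussCdf n f hfc
  have hdermeas : Measurable fun t => A |deriv g t| :=
    young_measurable_comp hA (measurable_deriv g).abs (fun t => abs_nonneg _)
  have hembed : MeasurableEmbedding gaussCdf :=
    continuous_gaussCdf.measurableEmbedding gaussCdf_strictMono.injective
  have hac : ProbabilityTheory.gaussianReal 0 1 ≪ (volume : Measure ℝ) :=
    ProbabilityTheory.gaussianReal_absolutelyContinuous 0 one_ne_zero
  have hgdiff : ∀ᵐ t ∂(ProbabilityTheory.gaussianReal 0 1), DifferentiableAt ℝ g t := by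
    have hvol : ∀ᵐ t ∂(volume : Measure ℝ), DifferentiableAt ℝ g t := by
      have hmono : Monotone (fun t => -(g t)) := fun x y hxy => neg_le_neg (hganti hxy)
      filter_upwards [hmono.ae_differentiableAt] with t ht
      have h2 := ht.neg
      simpa using h2
    exact Filter.Eventually.filter_mono hac.ae_le hvol
  have hkey : ∀ᵐ t ∂(ProbabilityTheory.gaussianReal 0 1),
      A (deriv (fun u => - rearr n f u) (gaussCdf t) * Igauss (gaussCdf t))
        = A |deriv g t| := by
    filter_upwards [hgdiff] with t ht
    have hd : HasDerivAt (fun u => rearr n f (gaussCdf u)) (deriv g t) t := by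
      have := ht.hasDerivAt
      rwa [hg] at this
    have hre := rearr_hasDerivAt_of_comp n f hd
    have hIg : Igauss (gaussCdf t) = gaussPdf t := by
      unfold Igauss
      rw [if_neg, gaussCdfInv_gaussCdf]
      push_neg
      exact ⟨(gaussCdf_pos t).ne', (gaussCdf_lt_one t).ne⟩
    have hdv : deriv (rearr n f) (gaussCdf t) = deriv g t * (gaussPdf t)⁻¹ := hre.deriv
    have hdg : deriv g t ≤ 0 := deriv_nonpos_of_antitone hganti t
    have hpdf : gaussPdf t ≠ 0 := (gaussPdf_pos t).ne'
    rw [deriv.fun_neg, hdv, hIg, abs_of_nonpos hdg]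
    congr 1
    field_simp
  have heqRHS : (∫ x, A (gradNorm n (gaussSymm n f) x) ∂gaussMeasure n)
      = ∫ t, A |deriv g t| ∂(ProbabilityTheory.gaussianReal 0 1) := by
    have h1 : (∫ x, A (gradNorm n (gaussSymm n f) x) ∂gaussMeasure n)
        = ∫ x, A |deriv g (x 0)| ∂gaussMeasure n := by
      apply integral_congr_ae
      filter_upwards with x
      rw [gradNorm_gaussSymm, ← hg]
    rw [h1, ← map_eval_gaussMeasure n,
      integral_map (measurable_pi_apply 0).aemeasurable hdermeas.aestronglyMeasurable]
  have heq : (∫ s in Set.Ioo (0:ℝ) 1, A (deriv (fun u => - rearr n f u) s * Igauss s))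
      = ∫ x, A (gradNorm n (gaussSymm n f) x) ∂gaussMeasure n := by
    rw [heqRHS, ← map_gaussCdf_eq, hembed.integral_map]
    exact integral_congr_ae hkey
  exact ⟨hineq, heq⟩
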